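/- Let A be a symmetric 2n×2n real matrix satisfying the Cordes condition: 0 < 1/σ ≤ Σᵢⱼ a_{ij}² ≤ (1/(2n−1+ε))(Σᵢ a_{ii})² for some ε ∈ (0,1], σ > 0. Set α = (Σᵢ a_{ii})/(Σᵢⱼ a_{ij}²). Then for every symmetric 2n×2n matrix M, |tr(M) − α·⟨A, M⟩|² ≤ (1−ε)·‖M‖²_{HS}, where ⟨A,M⟩ = Σᵢⱼ a_{ij}m_{ij} and ‖M‖²_{HS} = Σᵢⱼ m_{ij}². -/

import Mathlib

open Finset

/-- Pointwise Cordes inequality (formula (2.7) in Domokos–Manfredi). -/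
theorem cordes_pointwise (n : ℕ) (hn : 1 ≤ n) (ε σ : ℝ) (hε0 : 0 < ε) (hε1 : ε ≤ 1)
    (hσ : 0 < σ)
    (A M : Fin (2 * n) → Fin (2 * n) → ℝ)
    (hAsymm : ∀ i j, A i j = A j i) (hMsymm : ∀ i j, M i j = M j i)
    (hlow : 1 / σ ≤ ∑ i, ∑ j, (A i j)^2)
    (hcordes : ∑ i, ∑ j, (A i j)^2 ≤ (1 / (2 * (n : ℝ) - 1 + ε)) * (∑ i, A i i)^2) :
    ((∑ i, M i i) - ((∑ i, A i i) / (∑ i, ∑ j, (A i j)^2)) *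
        (∑ i, ∑ j, A i j * M i j))^2
      ≤ (1 - ε) * ∑ i, ∑ j, (M i j)^2 := by
  set s : ℝ := ∑ i, ∑ j, (A i j)^2 with hs
  set t : ℝ := ∑ i, A i i with ht
  have hspos : 0 < s := lt_of_lt_of_le (by positivity) hlow
  set α : ℝ := t / s with hα
  set B : Fin (2*n) → Fin (2*n) → ℝ := fun i j => (if i = j then 1 else 0) - α * A i j with hB
  have hd : (0:ℝ) < 2 * (n:ℝ) - 1 + ε := by
    have : (1:ℝ) ≤ (n:ℝ) := by exact_mod_cast hn
    nlinarith
  -- key inner product identity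
  have key : (∑ i, M i i) - α * (∑ i, ∑ j, A i j * M i j)
      = ∑ i, ∑ j, B i j * M i j := by
    have hterm : ∀ i j : Fin (2*n), B i j * M i j
        = (if i = j then M i j else 0) - α * (A i j * M i j) := by
      intro i j; by_cases h : i = j <;> simp [hB, h] <;> ring
    simp only [hterm, Finset.sum_sub_distrib, Finset.sum_ite_eq, Finset.mem_univ, if_true,
      ← Finset.mul_sum]
  -- norm of B
  have hBn : ∑ i, ∑ j, (B i j)^2 = 2 * (n:ℝ) - t^2 / s := by
    have expand : ∀ i j : Fin (2*n), (B i j)^2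
        = (if i = j then (1:ℝ) else 0) - 2 * α * ((if i = j then (1:ℝ) else 0) * A i j)
          + α^2 * (A i j)^2 := by
      intro i j
      by_cases h : i = j <;> simp [hB, h] <;> ring
    have hcard : (∑ i : Fin (2*n), ∑ j : Fin (2*n), (if i = j then (1:ℝ) else 0)) = 2 * (n:ℝ) := by
      simp [Finset.sum_ite_eq, Finset.mem_univ]
    have hdiag : (∑ i : Fin (2*n), ∑ j : Fin (2*n), (if i = j then (1:ℝ) else 0) * A i j) = t := by
      simp [ite_mul, Finset.sum_ite_eq, Finset.mem_univ, ht]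
    calc ∑ i, ∑ j, (B i j)^2
        = (∑ i : Fin (2*n), ∑ j : Fin (2*n), (if i = j then (1:ℝ) else 0))
          - 2 * α * (∑ i : Fin (2*n), ∑ j : Fin (2*n), (if i = j then (1:ℝ) else 0) * A i j)
          + α^2 * s := by
          simp only [expand, Finset.sum_add_distrib, Finset.sum_sub_distrib, ← Finset.mul_sum, hs]
      _ = 2 * (n:ℝ) - 2 * α * t + α^2 * s := by rw [hcard, hdiag]
      _ = 2 * (n:ℝ) - t^2 / s := by
          rw [hα]
          field_simp
          ring
  have hBle : ∑ i, ∑ j, (B i j)^2 ≤ 1 - ε := by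
    rw [hBn]
    have h1 : (2 * (n:ℝ) - 1 + ε) * s ≤ t^2 := by
      rw [div_mul_eq_mul_div, le_div_iff₀ hd, one_mul] at hcordes
      linarith [hcordes]
    have : 2 * (n:ℝ) - 1 + ε ≤ t^2 / s := (le_div_iff₀ hspos).2 h1
    linarith
  -- Cauchy-Schwarz
  have CS : (∑ i, ∑ j, B i j * M i j)^2
      ≤ (∑ i, ∑ j, (B i j)^2) * (∑ i, ∑ j, (M i j)^2) := by
    have := Finset.sum_mul_sq_le_sq_mul_sq Finset.univ
      (fun p : Fin (2*n) × Fin (2*n) => B p.1 p.2)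
      (fun p : Fin (2*n) × Fin (2*n) => M p.1 p.2)
    simpa [Fintype.sum_prod_type] using this
  have hM0 : 0 ≤ ∑ i, ∑ j, (M i j)^2 := by positivity
  calc ((∑ i, M i i) - α * (∑ i, ∑ j, A i j * M i j))^2
      = (∑ i, ∑ j, B i j * M i j)^2 := by rw [key]
    _ ≤ (∑ i, ∑ j, (B i j)^2) * (∑ i, ∑ j, (M i j)^2) := CS
    _ ≤ (1 - ε) * ∑ i, ∑ j, (M i j)^2 := mul_le_mul_of_nonneg_right hBle hM0
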